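/- Back-and-forth property for glued metrics: let $A' \subseteq A$ and $B$ be subsets with $A' \cup B = A \cup B = C$, and let $d_{A'}, d_B$ be compatible pseudometrics on $A', B$. Then $g(d_{A'}, d_B) = g(g(d_{A'}, d_B)|_A,\ d_B)$ as functions on $C \times C$. -/

import Mathlib

open ENNReal

/-- A pseudometric (with values in `[0,∞]`) on a subset `A` of `X`. -/
def IsPseudometricOn {X : Type} (A : Set X) (d : X → X → ℝ≥0∞) : Prop :=
  (∀ x ∈ A, d x x = 0) ∧
  (∀ x ∈ A, ∀ y ∈ A, d x y = d y x) ∧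
  (∀ x ∈ A, ∀ y ∈ A, ∀ z ∈ A, d x z ≤ d x y + d y z)

open Classical in
/-- The gluing of two compatible pseudometrics via shortest paths through the
intersection. -/
noncomputable def glueDist {X : Type} (U V : Set X) (dU dV : X → X → ℝ≥0∞)
    (x z : X) : ℝ≥0∞ :=
  if x ∈ U ∧ z ∈ U then dU x z
  else if x ∈ V ∧ z ∈ V then dV x z
  else if x ∈ U then ⨅ y ∈ U ∩ V, (dU x y + dV y z)
  else ⨅ y ∈ U ∩ V, (dV x y + dU y z)

lemma gd_uu {X : Type} {U V : Set X} {dU dV : X → X → ℝ≥0∞} {x z : X}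
    (hx : x ∈ U) (hz : z ∈ U) : glueDist U V dU dV x z = dU x z := by
  simp [glueDist, hx, hz]

lemma gd_vv {X : Type} {U V : Set X} {dU dV : X → X → ℝ≥0∞} {x z : X}
    (h : ¬(x ∈ U ∧ z ∈ U)) (hx : x ∈ V) (hz : z ∈ V) :
    glueDist U V dU dV x z = dV x z := by
  simp [glueDist, h, hx, hz]

lemma gd_uv {X : Type} {U V : Set X} {dU dV : X → X → ℝ≥0∞} {x z : X}
    (h1 : ¬(x ∈ U ∧ z ∈ U)) (h2 : ¬(x ∈ V ∧ z ∈ V)) (hx : x ∈ U) :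
    glueDist U V dU dV x z = ⨅ y ∈ U ∩ V, (dU x y + dV y z) := by
  have hz : z ∉ U := fun hz => h1 ⟨hx, hz⟩
  simp [glueDist, hz, h2, hx]

lemma gd_vu {X : Type} {U V : Set X} {dU dV : X → X → ℝ≥0∞} {x z : X}
    (h1 : ¬(x ∈ U ∧ z ∈ U)) (h2 : ¬(x ∈ V ∧ z ∈ V)) (hx : x ∉ U) :
    glueDist U V dU dV x z = ⨅ y ∈ U ∩ V, (dV x y + dU y z) := by
  simp [glueDist, h1, h2, hx]

/-- back-and-forth property for glued pseudometrics. -/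
theorem glueDist_back_and_forth {X : Type} (A' A B : Set X)
    (dA' dB : X → X → ℝ≥0∞)
    (hA'A : A' ⊆ A) (hUnion : A' ∪ B = A ∪ B)
    (hA' : IsPseudometricOn A' dA') (hB : IsPseudometricOn B dB)
    (hcompat : ∀ w ∈ A' ∩ B, ∀ w' ∈ A' ∩ B, dA' w w' = dB w w') :
    ∀ x ∈ A ∪ B, ∀ z ∈ A ∪ B,
      glueDist A' B dA' dB x z
        = glueDist A B (glueDist A' B dA' dB) dB x z := by
  intro x hx z hz
  by_cases hAA : x ∈ A ∧ z ∈ A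
  · rw [gd_uu hAA.1 hAA.2]
  by_cases hBB : x ∈ B ∧ z ∈ B
  · rw [gd_vv hAA hBB.1 hBB.2]
    by_cases hA'A' : x ∈ A' ∧ z ∈ A'
    · rw [gd_uu hA'A'.1 hA'A'.2]
      exact hcompat x ⟨hA'A'.1, hBB.1⟩ z ⟨hA'A'.2, hBB.2⟩
    · rw [gd_vv hA'A' hBB.1 hBB.2]
  by_cases hxA : x ∈ A
  · -- forward case: x ∈ A', z ∈ B \ A
    have hzA : z ∉ A := fun h => hAA ⟨hxA, h⟩
    have hzB : z ∈ B := hz.resolve_left hzA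
    have hxB : x ∉ B := fun h => hBB ⟨h, hzB⟩
    have hxA' : x ∈ A' := by
      have : x ∈ A' ∪ B := hUnion ▸ hx
      exact this.resolve_right hxB
    have hzA' : z ∉ A' := fun h => hzA (hA'A h)
    rw [gd_uv hAA hBB hxA,
      gd_uv (fun h => hzA' h.2) (fun h => hxB h.1) hxA']
    apply le_antisymm
    · -- LHS ≤ RHS
      refine le_iInf₂ fun y hy => ?_
      by_cases hyA' : y ∈ A'
      · rw [gd_uu hxA' hyA']
        exact iInf₂_le y ⟨hyA', hy.2⟩
      · have hyB : y ∈ B := hy.2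
        rw [gd_uv (fun h => hyA' h.2) (fun h => hxB h.1) hxA']
        rw [ENNReal.iInf_add]
        refine le_iInf fun w => ?_
        rw [ENNReal.iInf_add]
        refine le_iInf fun hw => ?_
        refine (iInf₂_le w hw).trans ?_
        have := hB.2.2 w hw.2 y hyB z hzB
        calc dA' x w + dB w z ≤ dA' x w + (dB w y + dB y z) := by
              exact add_le_add_right this _
          _ = dA' x w + dB w y + dB y z := by ring
    · -- RHS ≤ LHS
      refine le_iInf₂ fun y hy => ?_
      have : glueDist A' B dA' dB x y = dA' x y := gd_uu hxA' hy.1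
      refine (iInf₂_le y ⟨hA'A hy.1, hy.2⟩).trans ?_
      rw [this]
  · -- backward case: x ∈ B \ A, z ∈ A'
    have hxB : x ∈ B := hx.resolve_left hxA
    have hzB : z ∉ B := fun h => hBB ⟨hxB, h⟩
    have hzA : z ∈ A := hz.resolve_right hzB
    have hzA' : z ∈ A' := by
      have : z ∈ A' ∪ B := hUnion ▸ hz
      exact this.resolve_right hzB
    have hxA' : x ∉ A' := fun h => hxA (hA'A h)
    rw [gd_vu hAA hBB hxA,
      gd_vu (fun h => hxA' h.1) (fun h => hzB h.2) hxA']
    apply le_antisymm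
    · refine le_iInf₂ fun y hy => ?_
      by_cases hyA' : y ∈ A'
      · rw [gd_uu hyA' hzA']
        exact iInf₂_le y ⟨hyA', hy.2⟩
      · have hyB : y ∈ B := by
          have : y ∈ A' ∪ B := hUnion ▸ (Set.mem_union_left B hy.1)
          exact this.resolve_left hyA'
        rw [gd_vu (fun h => hyA' h.1) (fun h => hzB h.2) hyA']
        rw [ENNReal.add_iInf]
        refine le_iInf fun w => ?_
        rw [ENNReal.add_iInf]
        refine le_iInf fun hw => ?_
        refine (iInf₂_le w hw).trans ?_
        have := hB.2.2 x hxB y hyB w hw.2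
        calc dB x w + dA' w z ≤ (dB x y + dB y w) + dA' w z := by
              exact add_le_add_left this _
          _ = dB x y + (dB y w + dA' w z) := by ring
    · refine le_iInf₂ fun y hy => ?_
      have : glueDist A' B dA' dB y z = dA' y z := gd_uu hy.1 hzA'
      refine (iInf₂_le y ⟨hA'A hy.1, hy.2⟩).trans ?_
      rw [this]
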